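/- Let κ : ℝ → ℝ be square-integrable with ∫_ℝ κ(s)² ds > 0. Then there exists a Lipschitz, compactly supported function f : ℝ → ℝ, not identically zero, such that ∫_ℝ (f′(s))² ds < (1/π²)∫_ℝ κ(s)²·f(s)² ds (where f′ denotes the almost-everywhere derivative); that is, the effective quadratic form q_e takes a negative value. -/

import Mathlib

open MeasureTheory Set

/-- If `κ` is square-integrable and not a.e. zero (its squared integral
is positive), then the effective quadratic form
`q_e[f] = ∫ (|f'|² − (κ²/π²)|f|²)` takes a negative value on some Lipschitz,
compactly supported, nontrivial real function `f`. -/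
theorem effective_form_negative_value
    (κ : ℝ → ℝ) (hκ : Integrable (fun s : ℝ => (κ s) ^ 2))
    (hpos : 0 < ∫ s : ℝ, (κ s) ^ 2) :
    ∃ f : ℝ → ℝ, (∃ K : NNReal, LipschitzWith K f) ∧ HasCompactSupport f ∧ f ≠ 0 ∧
      (∫ s : ℝ, (deriv f s) ^ 2)
        < (1 / Real.pi ^ 2) * ∫ s : ℝ, (κ s) ^ 2 * (f s) ^ 2 := by
  set I := ∫ s : ℝ, (κ s) ^ 2 with hI
  -- pick a large n₀ so that the integral over [-n₀, n₀] exceeds I/2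
  have htend : Filter.Tendsto (fun n : ℕ => ∫ x in (-(n:ℝ))..(n:ℝ), (κ x) ^ 2)
      Filter.atTop (nhds I) :=
    intervalIntegral_tendsto_integral hκ
      (Filter.tendsto_neg_atBot_iff.mpr tendsto_natCast_atTop_atTop)
      tendsto_natCast_atTop_atTop
  have hev : ∀ᶠ n : ℕ in Filter.atTop,
      I / 2 < ∫ x in (-(n:ℝ))..(n:ℝ), (κ x) ^ 2 :=
    htend.eventually (eventually_gt_nhds (by linarith))
  obtain ⟨n₀, hn₀⟩ := hev.exists
  set J := ∫ x in (-(n₀:ℝ))..(n₀:ℝ), (κ x) ^ 2 with hJdef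
  have hJpos : 0 < J := lt_trans (by linarith) hn₀
  have hpisq : (0:ℝ) < Real.pi ^ 2 := by positivity
  set L : ℝ := max (n₀:ℝ) (4 * Real.pi ^ 2 / J + 1) with hLdef
  have hL : 0 < L := lt_of_lt_of_le (by positivity) (le_max_right _ _)
  have hLn : (n₀:ℝ) ≤ L := le_max_left _ _
  have hL4 : 4 * Real.pi ^ 2 / J < L :=
    lt_of_lt_of_le (by linarith) (le_max_right _ _)
  have hLne : L ≠ 0 := ne_of_gt hL
  -- the trapezoid cutoff function
  set f : ℝ → ℝ := fun x => min 1 (max 0 (2 - |x| / L)) with hfdef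
  have hf0le : ∀ x, 0 ≤ f x := fun x => le_min zero_le_one (le_max_left _ _)
  have hfle1 : ∀ x, f x ≤ 1 := fun x => min_le_left _ _
  have hf1 : ∀ x, |x| ≤ L → f x = 1 := by
    intro x hx
    have h1 : |x| / L ≤ 1 := (div_le_one hL).mpr hx
    have : (1:ℝ) ≤ max 0 (2 - |x| / L) := le_max_of_le_right (by linarith)
    simp [hfdef, min_eq_left this]
  have hf0 : ∀ x, 2 * L ≤ |x| → f x = 0 := by
    intro x hx
    have h1 : (2:ℝ) ≤ |x| / L := (le_div_iff₀ hL).mpr (by linarith)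
    have : max 0 (2 - |x| / L) = 0 := max_eq_left (by linarith)
    simp [hfdef, this]
  -- Lipschitz
  have hinner : LipschitzWith (Real.toNNReal (1 / L)) (fun x : ℝ => 2 - |x| / L) := by
    apply LipschitzWith.of_dist_le_mul
    intro x y
    rw [Real.dist_eq, Real.dist_eq, Real.coe_toNNReal _ (by positivity)]
    have h1 : (2 - |x| / L) - (2 - |y| / L) = (|y| - |x|) / L := by ring
    have h2 : |(|y| - |x|)| ≤ |x - y| :=
      (abs_abs_sub_abs_le_abs_sub y x).trans_eq (abs_sub_comm y x)
    calc |(2 - |x| / L) - (2 - |y| / L)| = |(|y| - |x|)| / L := by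
          rw [h1, abs_div, abs_of_pos hL]
      _ ≤ |x - y| / L := by gcongr
      _ = 1 / L * |x - y| := by ring
  have houter : LipschitzWith 1 (fun t : ℝ => min 1 (max 0 t)) :=
    (LipschitzWith.id.const_max 0).const_min 1
  have hlip : LipschitzWith (1 * Real.toNNReal (1 / L)) f := houter.comp hinner
  -- compact support
  have hsupp : HasCompactSupport f := by
    apply HasCompactSupport.intro (isCompact_Icc (a := -(2*L)) (b := 2*L))
    intro x hx
    apply hf0
    rcases le_or_gt (2 * L) |x| with h | h
    · exact h
    · exact absurd (abs_le.mp h.le) (by simpa [Set.mem_Icc] using hx)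
  -- nontrivial
  have hne : f ≠ 0 := by
    intro h
    have h0 : f 0 = 1 := hf1 0 (by simpa using hL.le)
    rw [h] at h0
    simp at h0
  -- deriv vanishes far away
  have hd0 : ∀ x, 2 * L < |x| → deriv f x = 0 := by
    intro x hx
    have hopen : IsOpen {y : ℝ | 2 * L < |y|} := isOpen_Ioi.preimage continuous_abs
    have hmem : {y : ℝ | 2 * L < |y|} ∈ nhds x := hopen.mem_nhds hx
    have heq : f =ᶠ[nhds x] (fun _ => (0:ℝ)) :=
      Filter.eventuallyEq_of_mem hmem (fun y hy => hf0 y (le_of_lt hy))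
    rw [heq.deriv_eq, deriv_const]
  -- global bound on the derivative
  have hdbd : ∀ x, |deriv f x| ≤ 1 / L := by
    intro x
    have h := norm_deriv_le_of_lipschitz (x₀ := x) hlip
    have hco : ((1 * Real.toNNReal (1/L) : NNReal) : ℝ) = 1 / L := by
      rw [one_mul, Real.coe_toNNReal _ (le_of_lt (by positivity : (0:ℝ) < 1/L))]
    rw [Real.norm_eq_abs, hco] at h
    exact h
  -- the dominating indicator function
  set g : ℝ → ℝ := Set.indicator (Icc (-(2*L)) (2*L)) (fun _ => (1/L)^2) with hgdef
  have hptg : ∀ x, (deriv f x) ^ 2 ≤ g x := by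
    intro x
    by_cases hx : x ∈ Icc (-(2*L)) (2*L)
    · have : g x = (1/L)^2 := Set.indicator_of_mem hx fun _ => (1/L)^2
      rw [this]
      have h1 := hdbd x
      have h2 := abs_le.mp h1
      exact sq_le_sq' (by linarith [h2.1]) h2.2
    · have hgx : g x = 0 := Set.indicator_of_notMem hx _
      have hax : 2 * L < |x| := by
        rcases lt_or_ge (2*L) |x| with h | h
        · exact h
        · exact absurd (abs_le.mp h) (by simpa [Set.mem_Icc] using hx)
      rw [hgx, hd0 x hax]
      norm_num
  have hgint : Integrable g := by
    rw [hgdef, integrable_indicator_iff measurableSet_Icc]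
    exact integrableOn_const measure_Icc_lt_top.ne
  have hderiv_meas : AEStronglyMeasurable (fun s : ℝ => (deriv f s) ^ 2) :=
    ((measurable_deriv f).pow_const 2).aestronglyMeasurable
  have hderiv_int : Integrable (fun s : ℝ => (deriv f s) ^ 2) := by
    apply hgint.mono' hderiv_meas
    filter_upwards with x
    rw [Real.norm_eq_abs, abs_of_nonneg (sq_nonneg _)]
    exact hptg x
  have hgcalc : ∫ x : ℝ, g x = 4 / L := by
    rw [hgdef, integral_indicator_const _ measurableSet_Icc]
    simp only [smul_eq_mul, Real.volume_Icc]
    rw [Real.volume_real_Icc_of_le (by linarith)]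
    field_simp
    ring
  have hderiv_le : (∫ s : ℝ, (deriv f s) ^ 2) ≤ 4 / L := by
    rw [← hgcalc]
    exact integral_mono hderiv_int hgint hptg
  -- the lower bound for the potential term
  set h : ℝ → ℝ := Set.indicator (Icc (-(n₀:ℝ)) (n₀:ℝ)) (fun s => (κ s) ^ 2) with hhdef
  have hhint : Integrable h := hκ.indicator measurableSet_Icc
  have hTint : Integrable (fun s : ℝ => (κ s) ^ 2 * (f s) ^ 2) := by
    apply hκ.mono' (hκ.1.mul ((hlip.continuous.pow 2).aestronglyMeasurable))
    filter_upwards with x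
    rw [Real.norm_eq_abs, abs_of_nonneg (mul_nonneg (sq_nonneg _) (sq_nonneg _))]
    calc (κ x) ^ 2 * (f x) ^ 2 ≤ (κ x) ^ 2 * 1 := by
          apply mul_le_mul_of_nonneg_left _ (sq_nonneg _)
          have := hfle1 x
          have := hf0le x
          nlinarith
      _ = (κ x) ^ 2 := mul_one _
  have hpth : ∀ x, h x ≤ (κ x) ^ 2 * (f x) ^ 2 := by
    intro x
    by_cases hx : x ∈ Icc (-(n₀:ℝ)) (n₀:ℝ)
    · have hxabs : |x| ≤ L := le_trans (abs_le.mpr ⟨hx.1, hx.2⟩) hLn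
      rw [hhdef, Set.indicator_of_mem hx, hf1 x hxabs]
      norm_num
    · rw [hhdef, Set.indicator_of_notMem hx]
      exact mul_nonneg (sq_nonneg _) (sq_nonneg _)
  have hhcalc : ∫ x : ℝ, h x = J := by
    rw [hhdef, integral_indicator measurableSet_Icc, integral_Icc_eq_integral_Ioc, hJdef,
      intervalIntegral.integral_of_le (by have : (0:ℝ) ≤ (n₀:ℝ) := Nat.cast_nonneg n₀; linarith : -(n₀:ℝ) ≤ (n₀:ℝ))]
  have hJle : J ≤ ∫ s : ℝ, (κ s) ^ 2 * (f s) ^ 2 := by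
    rw [← hhcalc]
    exact integral_mono hhint hTint hpth
  refine ⟨f, ⟨_, hlip⟩, hsupp, hne, ?_⟩
  have h1 : 4 / L < J / Real.pi ^ 2 :=
    (div_lt_div_iff₀ hL hpisq).mpr (by nlinarith [(div_lt_iff₀ hJpos).mp hL4])
  have h2 : J / Real.pi ^ 2 = 1 / Real.pi ^ 2 * J := by ring
  calc (∫ s : ℝ, (deriv f s) ^ 2) ≤ 4 / L := hderiv_le
    _ < 1 / Real.pi ^ 2 * J := by rw [← h2]; exact h1
    _ ≤ 1 / Real.pi ^ 2 * ∫ s : ℝ, (κ s) ^ 2 * (f s) ^ 2 :=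
        mul_le_mul_of_nonneg_left hJle (by positivity)
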